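/- Littlewood–Richardson coefficients have the semigroup property: if c^ν_{λ,μ} > 0 then c^{ℓν}_{ℓλ,ℓμ} > 0 for every positive integer ℓ, where ℓλ multiplies every part of λ by ℓ. -/

import Mathlib

/-- A partition, represented as a weakly decreasing function `ℕ → ℕ` that is
eventually zero. -/
def IsPartitionFn (f : ℕ → ℕ) : Prop :=
  (∀ i j : ℕ, i ≤ j → f j ≤ f i) ∧ ∃ N : ℕ, ∀ i : ℕ, N ≤ i → f i = 0

/-- The size (number of cells of the Young diagram) of a partition `f`. -/
noncomputable def psize (f : ℕ → ℕ) : ℕ :=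
  Nat.card {c : ℕ × ℕ // c.2 < f c.1}

/-- Membership of a cell `c = (row, col)` in the skew diagram `nu / lam`. -/
def inSkew (lam nu : ℕ → ℕ) (c : ℕ × ℕ) : Prop :=
  lam c.1 ≤ c.2 ∧ c.2 < nu c.1

/-- `T` is a Littlewood–Richardson skew tableau of shape `nu / lam` and weight `mu`:
a filling of the skew diagram with positive entries (and `0` outside), weakly
increasing along rows, strictly increasing down columns, with `mu r` entries equal to
`r + 1`, whose reverse reading word (right-to-left along rows, top to bottom) is a
lattice (ballot) word. -/
def IsLRFilling (lam mu nu : ℕ → ℕ) (T : ℕ × ℕ → ℕ) : Prop :=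
  (∀ c : ℕ × ℕ, ¬ inSkew lam nu c → T c = 0) ∧
  (∀ c : ℕ × ℕ, inSkew lam nu c → 1 ≤ T c) ∧
  (∀ i j j' : ℕ, j ≤ j' → inSkew lam nu (i, j) → inSkew lam nu (i, j') →
    T (i, j) ≤ T (i, j')) ∧
  (∀ i i' j : ℕ, i < i' → inSkew lam nu (i, j) → inSkew lam nu (i', j) →
    T (i, j) < T (i', j)) ∧
  (∀ r : ℕ, Nat.card {c : ℕ × ℕ // inSkew lam nu c ∧ T c = r + 1} = mu r) ∧
  (∀ (d : ℕ × ℕ) (r : ℕ),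
    Nat.card {c : ℕ × ℕ // inSkew lam nu c ∧
        (c.1 < d.1 ∨ (c.1 = d.1 ∧ d.2 ≤ c.2)) ∧ T c = r + 2} ≤
      Nat.card {c : ℕ × ℕ // inSkew lam nu c ∧
        (c.1 < d.1 ∨ (c.1 = d.1 ∧ d.2 ≤ c.2)) ∧ T c = r + 1})

/-- The Littlewood–Richardson coefficient `c^ν_{λ,μ}`, via the Littlewood–Richardson
rule: the number of LR skew tableaux of shape `ν / λ` and weight `μ`. -/
noncomputable def LRcoeff (lam mu nu : ℕ → ℕ) : ℕ :=
  Nat.card {T : ℕ × ℕ → ℕ // IsLRFilling lam mu nu T}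

namespace LRaux

lemma part_scale {nu : ℕ → ℕ} (hnu : IsPartitionFn nu) (l : ℕ) :
    IsPartitionFn fun i => l * nu i := by
  obtain ⟨h1, N, h2⟩ := hnu
  exact ⟨fun i j hij => Nat.mul_le_mul_left _ (h1 i j hij), N,
    fun i hi => by simp only []; rw [h2 i hi, mul_zero]⟩

lemma skew_scale {lam nu : ℕ → ℕ} {l : ℕ} (hl : 0 < l) (c : ℕ × ℕ) :
    inSkew (fun i => l * lam i) (fun i => l * nu i) c ↔ inSkew lam nu (c.1, c.2 / l) := by
  unfold inSkew
  simp only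
  rw [Nat.le_div_iff_mul_le hl, Nat.div_lt_iff_lt_mul hl, mul_comm (lam c.1) l,
    mul_comm (nu c.1) l]

lemma cnt_congr {P Q : ℕ × ℕ → Prop} (h : ∀ c, P c ↔ Q c) :
    Nat.card {c : ℕ × ℕ // P c} = Nat.card {c : ℕ × ℕ // Q c} :=
  Nat.card_congr (Equiv.subtypeEquivRight h)

lemma card_scale {l : ℕ} (hl : 0 < l) (Q : ℕ × ℕ → Prop) :
    Nat.card {c : ℕ × ℕ // Q (c.1, c.2 / l)} = l * Nat.card {c : ℕ × ℕ // Q c} := by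
  have hdiv : ∀ k t : ℕ, t < l → (l * k + t) / l = k := fun k t ht => by
    rw [Nat.mul_add_div hl, Nat.div_eq_of_lt ht, add_zero]
  have e : {c : ℕ × ℕ // Q (c.1, c.2 / l)} ≃ {c : ℕ × ℕ // Q c} × Fin l :=
    { toFun := fun c => (⟨(c.1.1, c.1.2 / l), c.2⟩, ⟨c.1.2 % l, Nat.mod_lt _ hl⟩)
      invFun := fun x => ⟨(x.1.1.1, l * x.1.1.2 + x.2.1), by
        have h := x.1.2
        rw [hdiv _ _ x.2.2]
        exact h⟩
      left_inv := fun c => Subtype.ext (by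
        obtain ⟨⟨i, j⟩, hc⟩ := c
        simp [Nat.div_add_mod])
      right_inv := fun x => by
        obtain ⟨⟨⟨i, k⟩, hk⟩, ⟨t, ht⟩⟩ := x
        simp [Prod.ext_iff, Subtype.ext_iff, hdiv k t ht, Nat.mul_add_mod,
          Nat.mod_eq_of_lt ht] }
  rw [Nat.card_congr e, Nat.card_prod]
  simp [mul_comm]

lemma cnt_scale {l : ℕ} (hl : 0 < l) {P : ℕ × ℕ → Prop} (Q : ℕ × ℕ → Prop)
    (h : ∀ c, P c ↔ Q (c.1, c.2 / l)) :
    Nat.card {c : ℕ × ℕ // P c} = l * Nat.card {c : ℕ × ℕ // Q c} := by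
  rw [cnt_congr h]
  exact card_scale hl Q

lemma skew_fin {lam nu : ℕ → ℕ} (hnu : IsPartitionFn nu) {P : ℕ × ℕ → Prop}
    (hP : ∀ c, P c → inSkew lam nu c) : {c : ℕ × ℕ | P c}.Finite := by
  obtain ⟨h1, N, h2⟩ := hnu
  apply Set.Finite.subset (Set.finite_Icc ((0, 0) : ℕ × ℕ) (N, nu 0))
  intro c hc
  obtain ⟨hc1, hc2⟩ := hP c hc
  simp only [Set.mem_Icc, Prod.le_def]
  refine ⟨⟨Nat.zero_le _, Nat.zero_le _⟩, ?_, ?_⟩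
  · by_contra hN
    push_neg at hN
    have := h2 c.1 (le_of_lt hN)
    omega
  · exact le_trans (le_of_lt hc2) (h1 0 c.1 (Nat.zero_le _))

lemma cnt_or {P Q : ℕ × ℕ → Prop} (hP : {c : ℕ × ℕ | P c}.Finite)
    (hQ : {c : ℕ × ℕ | Q c}.Finite) (hd : ∀ c, P c → Q c → False) :
    Nat.card {c : ℕ × ℕ // P c ∨ Q c}
      = Nat.card {c : ℕ × ℕ // P c} + Nat.card {c : ℕ × ℕ // Q c} := by
  have h1 : Nat.card {c : ℕ × ℕ // P c ∨ Q c} = ({c | P c} ∪ {c | Q c}).ncard := by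
    rw [← Set.setOf_or]
    exact Nat.card_coe_set_eq _
  have h2 : Nat.card {c : ℕ × ℕ // P c} = ({c : ℕ × ℕ | P c}).ncard :=
    Nat.card_coe_set_eq _
  have h3 : Nat.card {c : ℕ × ℕ // Q c} = ({c : ℕ × ℕ | Q c}).ncard :=
    Nat.card_coe_set_eq _
  rw [h1, h2, h3]
  exact Set.ncard_union_eq (Set.disjoint_left.mpr fun c hc hc' => (hd c hc hc').elim) hP hQ

lemma cnt_empty {P : ℕ × ℕ → Prop} (h : ∀ c, ¬ P c) :
    Nat.card {c : ℕ × ℕ // P c} = 0 := by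
  haveI : IsEmpty {c : ℕ × ℕ // P c} := ⟨fun c => h c.1 c.2⟩
  exact Nat.card_of_isEmpty

lemma cnt_single {x : ℕ × ℕ} {C : Prop} (hC : C) :
    Nat.card {c : ℕ × ℕ // c = x ∧ C} = 1 := by
  haveI : Unique {c : ℕ × ℕ // c = x ∧ C} :=
    { default := ⟨x, rfl, hC⟩, uniq := fun a => Subtype.ext a.2.1 }
  exact Nat.card_unique

lemma cnt_ico (p q m : ℕ) :
    Nat.card {c : ℕ × ℕ // c.1 = p ∧ q ≤ c.2 ∧ c.2 < q + m} = m := by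
  have e : {c : ℕ × ℕ // c.1 = p ∧ q ≤ c.2 ∧ c.2 < q + m} ≃ Fin m :=
    { toFun := fun c => ⟨c.1.2 - q, by obtain ⟨h1, h2, h3⟩ := c.2; omega⟩
      invFun := fun j => ⟨(p, q + j.1), rfl, by omega, by have := j.2; omega⟩
      left_inv := fun c => Subtype.ext (by
        obtain ⟨⟨a, b⟩, rfl, h1, h2⟩ := c
        simp only [Prod.mk.injEq, true_and]
        omega)
      right_inv := fun j => by
        apply Fin.ext
        simp }
  rw [Nat.card_congr e]
  simp

end LRaux


namespace LRaux

lemma fill_scale {lam mu nu : ℕ → ℕ} {T : ℕ × ℕ → ℕ} (hnu : IsPartitionFn nu)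
    {l : ℕ} (hl : 0 < l) (hT : IsLRFilling lam mu nu T) :
    IsLRFilling (fun i => l * lam i) (fun i => l * mu i) (fun i => l * nu i)
      (fun c => T (c.1, c.2 / l)) := by
  classical
  have hskew : ∀ c : ℕ × ℕ,
      inSkew (fun i => l * lam i) (fun i => l * nu i) c ↔ inSkew lam nu (c.1, c.2 / l) :=
    skew_scale hl
  obtain ⟨hT0, hT1, hTrow, hTcol, hTwt, hTb⟩ := hT
  refine ⟨?_, ?_, ?_, ?_, ?_, ?_⟩
  · intro c hc
    exact hT0 _ (fun hs => hc ((hskew c).mpr hs))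
  · intro c hc
    exact hT1 _ ((hskew c).mp hc)
  · intro i j j' hjj h1 h2
    exact hTrow i (j / l) (j' / l) (Nat.div_le_div_right hjj)
      ((hskew (i, j)).mp h1) ((hskew (i, j')).mp h2)
  · intro i i' j hii h1 h2
    exact hTcol i i' (j / l) hii ((hskew (i, j)).mp h1) ((hskew (i', j)).mp h2)
  · intro r
    have h := cnt_scale hl (fun k => inSkew lam nu k ∧ T k = r + 1)
      (P := fun c => inSkew (fun i => l * lam i) (fun i => l * nu i) c ∧
        T (c.1, c.2 / l) = r + 1)
      (fun c => by rw [hskew c])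
    rw [hTwt r] at h
    exact h
  · intro d r
    obtain ⟨p, q⟩ := d
    obtain ⟨k0, t, ht, rfl⟩ : ∃ k t, t < l ∧ q = l * k + t :=
      ⟨q / l, q % l, Nat.mod_lt _ hl, (Nat.div_add_mod q l).symm⟩
    have hmul1 : l * (k0 + 1) = l * k0 + l := by ring
    have hdivk : ∀ j, l * k0 ≤ j → j < l * (k0 + 1) → j / l = k0 := by
      intro j h1 h2
      apply Nat.div_eq_of_lt_le
      · rw [mul_comm k0 l]; exact h1
      · rw [mul_comm (k0 + 1) l]; exact h2
    -- the exact count of cells of a given value v in the big region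
    have hbig : ∀ v : ℕ,
        Nat.card {c : ℕ × ℕ // inSkew (fun i => l * lam i) (fun i => l * nu i) c ∧
            (c.1 < p ∨ (c.1 = p ∧ l * k0 + t ≤ c.2)) ∧ T (c.1, c.2 / l) = v}
          = l * Nat.card {c : ℕ × ℕ // inSkew lam nu c ∧
              (c.1 < p ∨ (c.1 = p ∧ k0 + 1 ≤ c.2)) ∧ T c = v}
            + (l - t) * (if inSkew lam nu (p, k0) ∧ T (p, k0) = v then 1 else 0) := by
      intro v
      -- split into main part and boundary strip
      have hsplit : ∀ c : ℕ × ℕ,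
          (inSkew (fun i => l * lam i) (fun i => l * nu i) c ∧
            (c.1 < p ∨ (c.1 = p ∧ l * k0 + t ≤ c.2)) ∧ T (c.1, c.2 / l) = v)
          ↔ ((inSkew (fun i => l * lam i) (fun i => l * nu i) c ∧
              (c.1 < p ∨ (c.1 = p ∧ l * (k0 + 1) ≤ c.2)) ∧ T (c.1, c.2 / l) = v)
            ∨ (c.1 = p ∧ l * k0 + t ≤ c.2 ∧ c.2 < l * (k0 + 1) ∧
                (inSkew lam nu (p, k0) ∧ T (p, k0) = v))) := by
        intro c
        constructor
        · rintro ⟨hs, hpos, hv⟩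
          rcases hpos with hlt | ⟨hcp, hq⟩
          · exact Or.inl ⟨hs, Or.inl hlt, hv⟩
          · rcases Nat.lt_or_ge c.2 (l * (k0 + 1)) with hsm | hbig
            · right
              have hd : c.2 / l = k0 := hdivk c.2 (le_trans (Nat.le_add_right _ _) hq) hsm
              refine ⟨hcp, hq, hsm, ?_, ?_⟩
              · have h := (hskew c).mp hs
                rwa [hcp, hd] at h
              · rw [← hcp, ← hd]; exact hv
            · exact Or.inl ⟨hs, Or.inr ⟨hcp, hbig⟩, hv⟩
        · rintro (⟨hs, hpos, hv⟩ | ⟨hcp, h1, h2, hsm, hv⟩)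
          · refine ⟨hs, ?_, hv⟩
            rcases hpos with hlt | ⟨hcp, hq⟩
            · exact Or.inl hlt
            · exact Or.inr ⟨hcp, by omega⟩
          · have hd : c.2 / l = k0 := hdivk c.2 (le_trans (Nat.le_add_right _ _) h1) h2
            refine ⟨?_, Or.inr ⟨hcp, h1⟩, ?_⟩
            · apply (hskew c).mpr
              rw [hcp, hd]
              exact hsm
            · rw [hcp, hd]
              exact hv
      rw [cnt_congr hsplit]
      rw [cnt_or ?fin1 ?fin2 ?disj]
      case fin1 =>
        exact skew_fin (part_scale hnu l) (fun c hc => hc.1)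
      case fin2 =>
        apply Set.Finite.subset (Set.finite_Icc (p, l * k0 + t) (p, l * (k0 + 1)))
        rintro ⟨x, y⟩ ⟨rfl, hy1, hy2, _⟩
        simp only [Set.mem_Icc, Prod.le_def]
        omega
      case disj =>
        rintro c ⟨_, hpos, _⟩ ⟨hcp, _, h2, _⟩
        rcases hpos with hlt | ⟨_, hq⟩
        · omega
        · omega
      congr 1
      · -- main part: full fibers
        exact cnt_scale hl (fun k => inSkew lam nu k ∧
            (k.1 < p ∨ (k.1 = p ∧ k0 + 1 ≤ k.2)) ∧ T k = v)
          (fun c => by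
            dsimp only
            constructor
            · rintro ⟨hs, hpos, hv⟩
              refine ⟨(hskew c).mp hs, ?_, hv⟩
              rcases hpos with hlt | ⟨hcp, hq⟩
              · exact Or.inl hlt
              · exact Or.inr ⟨hcp, (Nat.le_div_iff_mul_le hl).mpr (by rw [mul_comm]; exact hq)⟩
            · rintro ⟨hs, hpos, hv⟩
              refine ⟨(hskew c).mpr hs, ?_, hv⟩
              rcases hpos with hlt | ⟨hcp, hq⟩
              · exact Or.inl hlt
              · refine Or.inr ⟨hcp, ?_⟩
                have := (Nat.le_div_iff_mul_le hl).mp hq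
                rw [mul_comm] at this
                exact this)
      · -- boundary strip
        by_cases hC : inSkew lam nu (p, k0) ∧ T (p, k0) = v
        · rw [if_pos hC, mul_one]
          have hico := cnt_ico p (l * k0 + t) (l - t)
          rw [← hico]
          apply cnt_congr
          intro c
          constructor
          · rintro ⟨h1, h2, h3, _⟩
            exact ⟨h1, h2, by omega⟩
          · rintro ⟨h1, h2, h3⟩
            exact ⟨h1, h2, by omega, hC⟩
        · rw [if_neg hC, mul_zero]
          exact cnt_empty (fun c hc => hC hc.2.2.2)
    -- small counts at (p, k0) versus (p, k0+1)
    have hsm : ∀ v : ℕ,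
        Nat.card {c : ℕ × ℕ // inSkew lam nu c ∧
            (c.1 < p ∨ (c.1 = p ∧ k0 ≤ c.2)) ∧ T c = v}
          = Nat.card {c : ℕ × ℕ // inSkew lam nu c ∧
              (c.1 < p ∨ (c.1 = p ∧ k0 + 1 ≤ c.2)) ∧ T c = v}
            + (if inSkew lam nu (p, k0) ∧ T (p, k0) = v then 1 else 0) := by
      intro v
      have hsp : ∀ c : ℕ × ℕ,
          (inSkew lam nu c ∧ (c.1 < p ∨ (c.1 = p ∧ k0 ≤ c.2)) ∧ T c = v)
          ↔ ((inSkew lam nu c ∧ (c.1 < p ∨ (c.1 = p ∧ k0 + 1 ≤ c.2)) ∧ T c = v)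
            ∨ (c = (p, k0) ∧ (inSkew lam nu (p, k0) ∧ T (p, k0) = v))) := by
        intro c
        constructor
        · rintro ⟨hs, hpos, hv⟩
          rcases hpos with hlt | ⟨hcp, hq⟩
          · exact Or.inl ⟨hs, Or.inl hlt, hv⟩
          · rcases Nat.lt_or_ge c.2 (k0 + 1) with hsm2 | hbig2
            · right
              have hceq : c = (p, k0) := by
                obtain ⟨a, b⟩ := c
                simp only [Prod.mk.injEq]
                exact ⟨hcp, by omega⟩
              rw [hceq] at hs hv
              exact ⟨hceq, hs, hv⟩
            · exact Or.inl ⟨hs, Or.inr ⟨hcp, hbig2⟩, hv⟩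
        · rintro (⟨hs, hpos, hv⟩ | ⟨rfl, hs, hv⟩)
          · refine ⟨hs, ?_, hv⟩
            rcases hpos with hlt | ⟨hcp, hq⟩
            · exact Or.inl hlt
            · exact Or.inr ⟨hcp, by omega⟩
          · exact ⟨hs, Or.inr ⟨rfl, le_refl _⟩, hv⟩
      rw [cnt_congr hsp]
      rw [cnt_or ?fina ?finb ?disjb]
      case fina => exact skew_fin hnu (fun c hc => hc.1)
      case finb =>
        apply Set.Finite.subset (Set.finite_singleton ((p, k0) : ℕ × ℕ))
        rintro c ⟨rfl, _⟩
        exact rfl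
      case disjb =>
        rintro c ⟨_, hpos, _⟩ ⟨rfl, _⟩
        rcases hpos with hlt | ⟨_, hq⟩
        · simp at hlt
        · simp at hq
      congr 1
      by_cases hC : inSkew lam nu (p, k0) ∧ T (p, k0) = v
      · rw [if_pos hC, cnt_single hC]
      · rw [if_neg hC]
        exact cnt_empty (fun c hc => hC hc.2)
    -- the two small ballot conditions
    have hb1 : Nat.card {c : ℕ × ℕ // inSkew lam nu c ∧
          (c.1 < p ∨ (c.1 = p ∧ k0 + 1 ≤ c.2)) ∧ T c = r + 2}
        ≤ Nat.card {c : ℕ × ℕ // inSkew lam nu c ∧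
          (c.1 < p ∨ (c.1 = p ∧ k0 + 1 ≤ c.2)) ∧ T c = r + 1} := hTb (p, k0 + 1) r
    have hb0 : Nat.card {c : ℕ × ℕ // inSkew lam nu c ∧
          (c.1 < p ∨ (c.1 = p ∧ k0 ≤ c.2)) ∧ T c = r + 2}
        ≤ Nat.card {c : ℕ × ℕ // inSkew lam nu c ∧
          (c.1 < p ∨ (c.1 = p ∧ k0 ≤ c.2)) ∧ T c = r + 1} := hTb (p, k0) r
    rw [hsm (r + 2), hsm (r + 1)] at hb0
    -- assemble
    have key : l * Nat.card {c : ℕ × ℕ // inSkew lam nu c ∧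
          (c.1 < p ∨ (c.1 = p ∧ k0 + 1 ≤ c.2)) ∧ T c = r + 2}
          + (l - t) * (if inSkew lam nu (p, k0) ∧ T (p, k0) = r + 2 then 1 else 0)
        ≤ l * Nat.card {c : ℕ × ℕ // inSkew lam nu c ∧
          (c.1 < p ∨ (c.1 = p ∧ k0 + 1 ≤ c.2)) ∧ T c = r + 1}
          + (l - t) * (if inSkew lam nu (p, k0) ∧ T (p, k0) = r + 1 then 1 else 0) := by
      by_cases hC2 : inSkew lam nu (p, k0) ∧ T (p, k0) = r + 2
      · have hC1 : ¬ (inSkew lam nu (p, k0) ∧ T (p, k0) = r + 1) := by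
          rintro ⟨_, h1⟩
          rw [hC2.2] at h1
          omega
        rw [if_pos hC2, if_neg hC1, mul_one, mul_zero, add_zero]
        rw [if_pos hC2, if_neg hC1] at hb0
        have hstep : Nat.card {c : ℕ × ℕ // inSkew lam nu c ∧
              (c.1 < p ∨ (c.1 = p ∧ k0 + 1 ≤ c.2)) ∧ T c = r + 2} + 1
            ≤ Nat.card {c : ℕ × ℕ // inSkew lam nu c ∧
              (c.1 < p ∨ (c.1 = p ∧ k0 + 1 ≤ c.2)) ∧ T c = r + 1} := by omega
        have h4 := Nat.mul_le_mul_left l hstep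
        have h5 : l * (Nat.card {c : ℕ × ℕ // inSkew lam nu c ∧
              (c.1 < p ∨ (c.1 = p ∧ k0 + 1 ≤ c.2)) ∧ T c = r + 2} + 1)
            = l * Nat.card {c : ℕ × ℕ // inSkew lam nu c ∧
              (c.1 < p ∨ (c.1 = p ∧ k0 + 1 ≤ c.2)) ∧ T c = r + 2} + l := by ring
        omega
      · rw [if_neg hC2, mul_zero, add_zero]
        have h4 := Nat.mul_le_mul_left l hb1
        exact le_trans h4 (Nat.le_add_right _ _)
    exact ((hbig (r + 2)).trans_le key).trans_eq (hbig (r + 1)).symm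

end LRaux


namespace LRaux

lemma fillings_finite (lam mu nu : ℕ → ℕ) (hmu : IsPartitionFn mu) (hnu : IsPartitionFn nu) :
    Finite {T : ℕ × ℕ → ℕ // IsLRFilling lam mu nu T} := by
  obtain ⟨hmono, N, hN⟩ := hnu
  obtain ⟨hmmono, M, hM⟩ := hmu
  have hbox : ∀ c : ℕ × ℕ, ¬ (c.1 < N ∧ c.2 < nu 0) → ¬ inSkew lam nu c := by
    intro c hc hs
    obtain ⟨h1, h2⟩ := hs
    apply hc
    constructor
    · by_contra hcon
      push_neg at hcon
      rw [hN c.1 hcon] at h2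
      omega
    · exact lt_of_lt_of_le h2 (hmono 0 c.1 (Nat.zero_le _))
  have hval : ∀ U : {T : ℕ × ℕ → ℕ // IsLRFilling lam mu nu T}, ∀ c, U.1 c ≤ M := by
    intro U c
    by_cases hc : inSkew lam nu c
    · by_contra hgt
      push_neg at hgt
      have hpos1 : 1 ≤ U.1 c := U.2.2.1 c hc
      have hw := U.2.2.2.2.2.1 (U.1 c - 1)
      have hz : mu (U.1 c - 1) = 0 := hM _ (by omega)
      have hfin : {c' : ℕ × ℕ | inSkew lam nu c' ∧ U.1 c' = (U.1 c - 1) + 1}.Finite :=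
        skew_fin ⟨hmono, N, hN⟩ (fun _ hx => hx.1)
      haveI : Finite {c' : ℕ × ℕ // inSkew lam nu c' ∧ U.1 c' = (U.1 c - 1) + 1} :=
        hfin.to_subtype
      haveI : Nonempty {c' : ℕ × ℕ // inSkew lam nu c' ∧ U.1 c' = (U.1 c - 1) + 1} :=
        ⟨⟨c, hc, by omega⟩⟩
      have hp := Nat.card_pos
        (α := {c' : ℕ × ℕ // inSkew lam nu c' ∧ U.1 c' = (U.1 c - 1) + 1})
      rw [hw, hz] at hp
      omega
    · rw [U.2.1 c hc]
      exact Nat.zero_le _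
  apply Finite.of_injective (β := Fin N × Fin (nu 0) → Fin (M + 1))
    (f := fun U x => ⟨U.1 (x.1.1, x.2.1), Nat.lt_succ_of_le (hval U _)⟩)
  intro U V hUV
  apply Subtype.ext
  funext c
  by_cases hc : c.1 < N ∧ c.2 < nu 0
  · have h := congrArg Fin.val (congrFun hUV (⟨c.1, hc.1⟩, ⟨c.2, hc.2⟩))
    exact h
  · have hout := hbox c hc
    rw [U.2.1 c hout, V.2.1 c hout]

end LRaux


/-- semigroup property of Littlewood–Richardson coefficients:
if `c^ν_{λ,μ} > 0` then `c^{ℓν}_{ℓλ,ℓμ} > 0` for every `ℓ > 0`. -/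
theorem LR_semigroup (lam mu nu : ℕ → ℕ)
    (hlam : IsPartitionFn lam) (hmu : IsPartitionFn mu) (hnu : IsPartitionFn nu)
    (hsize : psize nu = psize lam + psize mu)
    (h : 0 < LRcoeff lam mu nu) (ℓ : ℕ) (hℓ : 0 < ℓ) :
    0 < LRcoeff (fun i => ℓ * lam i) (fun i => ℓ * mu i) (fun i => ℓ * nu i) := by
  have hne : Nonempty {T : ℕ × ℕ → ℕ // IsLRFilling lam mu nu T} := by
    by_contra hcon
    rw [not_nonempty_iff] at hcon
    unfold LRcoeff at h
    rw [Nat.card_of_isEmpty] at h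
    exact absurd h (lt_irrefl 0)
  obtain ⟨T, hT⟩ := hne
  have hfill := LRaux.fill_scale hnu hℓ hT
  unfold LRcoeff
  haveI := LRaux.fillings_finite (fun i => ℓ * lam i) (fun i => ℓ * mu i)
    (fun i => ℓ * nu i) (LRaux.part_scale hmu ℓ) (LRaux.part_scale hnu ℓ)
  haveI : Nonempty {U : ℕ × ℕ → ℕ // IsLRFilling (fun i => ℓ * lam i)
      (fun i => ℓ * mu i) (fun i => ℓ * nu i) U} := ⟨⟨_, hfill⟩⟩
  exact Nat.card_pos
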